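/- In the exterior algebra of rational differential forms, with $\omega_{i,j,\eta} := (dz_i - \eta\, dz_j)/(z_i-\eta z_j)$, for any roots of unity $\eta,\theta$ the relation $\omega_{i,j,\eta\theta^{-1}}\wedge\omega_{j,k,\theta} + \omega_{i,k,\eta}\wedge\omega_{j,i,\theta\eta^{-1}} = \omega_{i,k,\eta}\wedge\omega_{j,k,\theta}$ holds. -/

import Mathlib

set_option synthInstance.maxHeartbeats 1000000
set_option maxHeartbeats 1000000

noncomputable section

/-- The field of rational functions `ℂ(z_i, z_j, z_k)` in three variables. -/
abbrev K3 : Type := FractionRing (MvPolynomial (Fin 3) ℂ)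

/-- The coordinate functions. -/
def z3 (i : Fin 3) : K3 := algebraMap (MvPolynomial (Fin 3) ℂ) K3 (MvPolynomial.X i)

/-- A complex constant, viewed in `ℂ(z_i, z_j, z_k)`. -/
def c3 (a : ℂ) : K3 := algebraMap (MvPolynomial (Fin 3) ℂ) K3 (MvPolynomial.C a)

/-- The exterior algebra of differential forms with rational-function coefficients. -/
abbrev E3 : Type := ExteriorAlgebra K3 (Fin 3 → K3)

/-- The 1-form `dz_i`. -/
def dz3 (i : Fin 3) : E3 := ExteriorAlgebra.ι K3 (Pi.single i 1)

/-- The 1-form `ω_{i,j,η} = (dz_i - η dz_j)/(z_i - η z_j)`. -/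
def omE3 (i j : Fin 3) (η : ℂ) : E3 :=
  (z3 i - c3 η * z3 j)⁻¹ • (dz3 i - c3 η • dz3 j)

def f3 : ℂ →+* K3 := (algebraMap (MvPolynomial (Fin 3) ℂ) K3).comp MvPolynomial.C

lemma c3_eq (a : ℂ) : c3 a = f3 a := rfl

lemma c3_ne (a : ℂ) (h : a ≠ 0) : c3 a ≠ 0 := by
  rw [c3_eq]; exact fun h0 => h (by simpa using (map_eq_zero f3).mp h0)

lemma z3_sub_ne (t : ℂ) {i j : Fin 3} (h : i ≠ j) : z3 i - c3 t * z3 j ≠ 0 := by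
  have heq : z3 i - c3 t * z3 j
      = algebraMap (MvPolynomial (Fin 3) ℂ) K3 (MvPolynomial.X i - MvPolynomial.C t * MvPolynomial.X j) := by
    simp [z3, c3, map_sub, map_mul]
  rw [heq]
  intro hzero
  have h0 : (MvPolynomial.X i - MvPolynomial.C t * MvPolynomial.X j : MvPolynomial (Fin 3) ℂ) = 0 :=
    IsFractionRing.injective (MvPolynomial (Fin 3) ℂ) K3 (by simpa using hzero)
  have := congrArg (MvPolynomial.eval (Pi.single i 1)) h0
  simp [Pi.single_eq_of_ne h.symm] at this

lemma anticomm (x y : Fin 3 → K3) :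
    ExteriorAlgebra.ι K3 y * ExteriorAlgebra.ι K3 x = -(ExteriorAlgebra.ι K3 x * ExteriorAlgebra.ι K3 y) :=
  eq_neg_of_add_eq_zero_left (ExteriorAlgebra.ι_add_mul_swap y x)

lemma m0 (a : K3) : a • (0:E3) = 0 := by rw [Algebra.smul_def, mul_zero]
lemma msub (a : K3) (x y : E3) : a • (x - y) = a • x - a • y := by
  rw [Algebra.smul_def, Algebra.smul_def, Algebra.smul_def, mul_sub]
lemma mneg (a : K3) (x : E3) : a • (-x) = -(a • x) := by
  rw [Algebra.smul_def, Algebra.smul_def, mul_neg]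
lemma mm (a b : K3) (x : E3) : a • b • x = (a*b) • x := by
  rw [Algebra.smul_def, Algebra.smul_def, Algebra.smul_def, map_mul, mul_assoc]
lemma mmulr (a : K3) (x y : E3) : (a • x) * y = a • (x*y) := by
  rw [Algebra.smul_def, Algebra.smul_def, mul_assoc]
lemma mmull (a : K3) (x y : E3) : x * (a • y) = a • (x*y) := by
  rw [Algebra.smul_def, Algebra.smul_def, ← mul_assoc, ← Algebra.commutes a x, mul_assoc]
lemma madd (a b : K3) (x : E3) : (a + b) • x = a • x + b • x := by
  rw [Algebra.smul_def, Algebra.smul_def, Algebra.smul_def, map_add, add_mul]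
lemma mmulmul (a b : K3) (x y : E3) : (a • x) * (b • y) = (a*b) • (x*y) := by
  rw [mmulr, mmull, mm]

lemma scalar_key {F : Type*} [Field F] (A B m : F) (hA : A ≠ 0) (hB : B ≠ 0)
    (hm : m ≠ 0) (hC : A + m * B ≠ 0) :
    A⁻¹ * B⁻¹ + (A + m * B)⁻¹ * (-m⁻¹ * A)⁻¹ = (A + m * B)⁻¹ * B⁻¹ := by
  have hC' : B * m + A ≠ 0 := by rw [mul_comm B m, add_comm]; exact hC
  field_simp
  linear_combination -(mul_inv_cancel₀ hC')

/-- For roots of unity `η, θ`, with `i,j,k` the three coordinates `0,1,2`: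
`ω_{i,j,ηθ⁻¹} ∧ ω_{j,k,θ} + ω_{i,k,η} ∧ ω_{j,i,θη⁻¹} = ω_{i,k,η} ∧ ω_{j,k,θ}`. -/
theorem stmt7 (r : ℕ) (hr : 0 < r) (η θ : ℂ) (hη : η ^ r = 1) (hθ : θ ^ r = 1) :
    omE3 0 1 (η * θ⁻¹) * omE3 1 2 θ + omE3 0 2 η * omE3 1 0 (θ * η⁻¹)
      = omE3 0 2 η * omE3 1 2 θ := by
  have hη0 : η ≠ 0 := by rintro rfl; simp [zero_pow hr.ne'] at hη
  have hθ0 : θ ≠ 0 := by rintro rfl; simp [zero_pow hr.ne'] at hθ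
  have hcη : c3 η ≠ 0 := c3_ne η hη0
  have hcθ : c3 θ ≠ 0 := c3_ne θ hθ0
  have hμ : c3 (η * θ⁻¹) = c3 η * (c3 θ)⁻¹ := by simp [c3_eq, map_mul, map_inv₀]
  have hν : c3 (θ * η⁻¹) = c3 θ * (c3 η)⁻¹ := by simp [c3_eq, map_mul, map_inv₀]
  have ha : z3 0 - c3 η * (c3 θ)⁻¹ * z3 1 ≠ 0 := hμ ▸ z3_sub_ne (η * θ⁻¹) (by decide)
  have hb : z3 1 - c3 θ * z3 2 ≠ 0 := z3_sub_ne _ (by decide)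
  have hc : z3 0 - c3 η * z3 2 ≠ 0 := z3_sub_ne _ (by decide)
  have hd : z3 1 - c3 θ * (c3 η)⁻¹ * z3 0 ≠ 0 := hν ▸ z3_sub_ne (θ * η⁻¹) (by decide)
  set W : E3 := dz3 0 * dz3 1 - c3 θ • (dz3 0 * dz3 2) + c3 η • (dz3 1 * dz3 2) with hW
  have hs1 : c3 η * (c3 θ)⁻¹ * c3 θ = c3 η := by field_simp
  have hs1b : c3 θ * (c3 η * (c3 θ)⁻¹) = c3 η := by rw [mul_comm]; exact hs1
  have hs2 : c3 η * (c3 θ * (c3 η)⁻¹) = c3 θ := by rw [mul_comm (c3 θ), ← mul_assoc]; field_simp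
  have hs2b : c3 θ * (c3 η)⁻¹ * c3 η = c3 θ := by field_simp
  have hP1 : (dz3 0 - (c3 η * (c3 θ)⁻¹) • dz3 1) * (dz3 1 - c3 θ • dz3 2) = W := by
    simp only [hW, dz3, sub_mul, mul_sub, mmulr, mmull, mm, msub, mneg, m0,
      ExteriorAlgebra.ι_sq_zero, anticomm (Pi.single 0 1) (Pi.single 1 1),
      anticomm (Pi.single 0 1) (Pi.single 2 1), anticomm (Pi.single 1 1) (Pi.single 2 1),
      sub_zero, zero_sub, neg_neg, sub_neg_eq_add, hs1, hs1b, hs2, hs2b]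
    abel
  have hP2 : (dz3 0 - c3 η • dz3 2) * (dz3 1 - (c3 θ * (c3 η)⁻¹) • dz3 0) = W := by
    simp only [hW, dz3, sub_mul, mul_sub, mmulr, mmull, mm, msub, mneg, m0,
      ExteriorAlgebra.ι_sq_zero, anticomm (Pi.single 0 1) (Pi.single 1 1),
      anticomm (Pi.single 0 1) (Pi.single 2 1), anticomm (Pi.single 1 1) (Pi.single 2 1),
      sub_zero, zero_sub, neg_neg, sub_neg_eq_add, hs1, hs1b, hs2, hs2b]
    abel
  have hP3 : (dz3 0 - c3 η • dz3 2) * (dz3 1 - c3 θ • dz3 2) = W := by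
    simp only [hW, dz3, sub_mul, mul_sub, mmulr, mmull, mm, msub, mneg, m0,
      ExteriorAlgebra.ι_sq_zero, anticomm (Pi.single 0 1) (Pi.single 1 1),
      anticomm (Pi.single 0 1) (Pi.single 2 1), anticomm (Pi.single 1 1) (Pi.single 2 1),
      sub_zero, zero_sub, neg_neg, sub_neg_eq_add]
    abel
  have e1 : omE3 0 1 (η * θ⁻¹) * omE3 1 2 θ
      = ((z3 0 - c3 η * (c3 θ)⁻¹ * z3 1)⁻¹ * (z3 1 - c3 θ * z3 2)⁻¹) • W := by
    rw [omE3, omE3, hμ, mmulmul, hP1]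
  have e2 : omE3 0 2 η * omE3 1 0 (θ * η⁻¹)
      = ((z3 0 - c3 η * z3 2)⁻¹ * (z3 1 - c3 θ * (c3 η)⁻¹ * z3 0)⁻¹) • W := by
    rw [omE3, omE3, hν, mmulmul, hP2]
  have e3 : omE3 0 2 η * omE3 1 2 θ
      = ((z3 0 - c3 η * z3 2)⁻¹ * (z3 1 - c3 θ * z3 2)⁻¹) • W := by
    rw [omE3, omE3, mmulmul, hP3]
  have hm0 : c3 η * (c3 θ)⁻¹ ≠ 0 := mul_ne_zero hcη (inv_ne_zero hcθ)
  have hca : z3 0 - c3 η * z3 2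
      = (z3 0 - c3 η * (c3 θ)⁻¹ * z3 1) + (c3 η * (c3 θ)⁻¹) * (z3 1 - c3 θ * z3 2) := by
    field_simp
    ring
  have hinv : (c3 η * (c3 θ)⁻¹)⁻¹ = c3 θ * (c3 η)⁻¹ := by
    rw [mul_inv, inv_inv, mul_comm]
  have hmm1 : (c3 η * (c3 θ)⁻¹) * (c3 θ * (c3 η)⁻¹) = 1 := by
    rw [← hinv]; exact mul_inv_cancel₀ hm0
  have h' : (c3 η * (c3 θ)⁻¹) * (z3 1 - c3 θ * (c3 η)⁻¹ * z3 0)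
      = -(z3 0 - c3 η * (c3 θ)⁻¹ * z3 1) := by
    linear_combination (-(z3 0)) * hmm1
  have hda : z3 1 - c3 θ * (c3 η)⁻¹ * z3 0
      = -(c3 η * (c3 θ)⁻¹)⁻¹ * (z3 0 - c3 η * (c3 θ)⁻¹ * z3 1) := by
    have h'' : (c3 η * (c3 θ)⁻¹)⁻¹ * ((c3 η * (c3 θ)⁻¹) * (z3 1 - c3 θ * (c3 η)⁻¹ * z3 0))
        = z3 1 - c3 θ * (c3 η)⁻¹ * z3 0 := by
      rw [← mul_assoc, inv_mul_cancel₀ hm0, one_mul]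
    rw [← h'', h']; ring
  rw [e1, e2, e3, ← madd]
  congr 1
  rw [hca, hda]
  exact scalar_key _ _ _ ha hb hm0 (hca ▸ hc)

end
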